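/- arXiv:2510.01488 — 4 statements merged into one kernel-verified Lean document; each statement's English description precedes it below -/
import Mathlib

section
/- Let R be a commutative ring and let F ∈ R⟦x,y⟧ be a formal power series in two variables with zero constant coefficient, with the coefficients of x and of y both equal to 1, and with F(x,0) = x and F(0,y) = y. Let g, h ∈ R⟦z⟧ have zero constant coefficients, suppose the coefficient of z in g is 1, and suppose g(h(z)) = z and h(g(z)) = z (composition of power series). Define G(x,y) = g(F(h(x), h(y))) ∈ R⟦x,y⟧. Then the coefficient of x·y in G equals the coefficient of x·y in F plus 2 times the coefficient of z² in g. -/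
/-- Substitution of (multivariate) formal power series: for `a : σ → MvPowerSeries τ R`
(each entry having zero constant coefficient) and `f ∈ R⟦xₛ : s ∈ σ⟧`, the coefficient
of the monomial `d` in `f(a)` is the (finite) sum over exponents `e` of
`(coeff of e in f) * (coeff of d in ∏ₛ (a s)^(e s))`. -/
noncomputable def MvPowerSeries.substitute {σ τ R : Type*} [CommRing R]
    (a : σ → MvPowerSeries τ R) (f : MvPowerSeries σ R) : MvPowerSeries τ R :=
  fun d => ∑ᶠ e : σ →₀ ℕ, MvPowerSeries.coeff e f *
    MvPowerSeries.coeff d (e.prod fun s n => a s ^ n)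

/-- Substitution of a one-variable formal power series `g ∈ R⟦z⟧` at a
(multivariate) power series `s`, i.e. `g(s)`. -/
noncomputable def PowerSeries.substitute {τ R : Type*} [CommRing R]
    (s : MvPowerSeries τ R) (g : PowerSeries R) : MvPowerSeries τ R :=
  MvPowerSeries.substitute (fun _ : Unit => s) g

open MvPowerSeries PowerSeries

set_option linter.unusedVariables false

section Aux
variable {τ R : Type*} [CommRing R]

def OrdGe (f : MvPowerSeries τ R) (n : ℕ) : Prop :=
  ∀ d : τ →₀ ℕ, (d.sum fun _ k => k) < n → MvPowerSeries.coeff d f = 0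

lemma deg_add (p q : τ →₀ ℕ) :
    ((p + q).sum fun _ k => k) = (p.sum fun _ k => k) + (q.sum fun _ k => k) :=
  Finsupp.sum_add_index' (fun _ => rfl) (fun _ _ _ => rfl)

lemma deg_eq_zero {d : τ →₀ ℕ} (hd : (d.sum fun _ k => k) = 0) : d = 0 := by
  ext a
  by_contra ha
  have : a ∈ d.support := Finsupp.mem_support_iff.2 (by simpa using ha)
  have := Finset.sum_eq_zero_iff.1 hd a this
  simp at this
  exact ha (by simpa using this)

lemma ordGe_of_constantCoeff {f : MvPowerSeries τ R} (hf : MvPowerSeries.constantCoeff f = 0) :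
    OrdGe f 1 := by
  intro d hd
  have : d = 0 := deg_eq_zero (Nat.lt_one_iff.1 hd)
  subst this
  exact hf

lemma OrdGe.mul {f g : MvPowerSeries τ R} {m n : ℕ} (hf : OrdGe f m) (hg : OrdGe g n) :
    OrdGe (f * g) (m + n) := by
  classical
  intro d hd
  rw [MvPowerSeries.coeff_mul]
  apply Finset.sum_eq_zero
  rintro ⟨p, q⟩ hpq
  have hpq' : p + q = d := Finset.HasAntidiagonal.mem_antidiagonal.1 hpq
  have hsum : (p.sum fun _ k => k) + (q.sum fun _ k => k) < m + n := by
    rw [← deg_add, hpq']; exact hd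
  rcases lt_or_ge (p.sum fun _ k => k) m with h | h
  · simp [hf p h]
  · have : (q.sum fun _ k => k) < n := by omega
    simp [hg q this]

lemma OrdGe.pow {f : MvPowerSeries τ R} (hf : OrdGe f 1) (n : ℕ) : OrdGe (f ^ n) n := by
  induction n with
  | zero => intro d hd; omega
  | succ k ih =>
      rw [pow_succ]
      exact (by simpa using ih.mul hf)

lemma ordGe_prod_pow {σ : Type*} {a : σ → MvPowerSeries τ R} (ha : ∀ s, OrdGe (a s) 1)
    (e : σ →₀ ℕ) : OrdGe (e.prod fun s n => a s ^ n) (e.sum fun _ n => n) := by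
  rw [Finsupp.prod, Finsupp.sum]
  classical
  induction e.support using Finset.induction_on with
  | empty => simp only [Finset.prod_empty, Finset.sum_empty]; intro d hd; omega
  | @insert x u hs ih =>
      rw [Finset.prod_insert hs, Finset.sum_insert hs]
      exact ((ha x).pow (e x)).mul ih

lemma coeff_substitute_eq_sum {σ : Type*} (a : σ → MvPowerSeries τ R)
    (ha : ∀ s, OrdGe (a s) 1) (f : MvPowerSeries σ R) (d : τ →₀ ℕ)
    (t : Finset (σ →₀ ℕ))
    (ht : ∀ e : σ →₀ ℕ, (e.sum fun _ n => n) ≤ (d.sum fun _ n => n) → e ∈ t) :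
    MvPowerSeries.coeff d (MvPowerSeries.substitute a f) =
      ∑ e ∈ t, MvPowerSeries.coeff e f *
        MvPowerSeries.coeff d (e.prod fun s n => a s ^ n) := by
  show (∑ᶠ e : σ →₀ ℕ, MvPowerSeries.coeff e f *
      MvPowerSeries.coeff d (e.prod fun s n => a s ^ n)) = _
  apply finsum_eq_finset_sum_of_support_subset
  intro e he
  simp only [Function.mem_support] at he
  apply ht
  by_contra hlt
  push_neg at hlt
  exact he (by rw [ordGe_prod_pow ha e d hlt, mul_zero])

end Aux
section Spec
variable {τ R : Type*} [CommRing R]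

lemma deg_single {σ : Type*} (i : σ) (k : ℕ) :
    ((Finsupp.single i k).sum fun _ n => n) = k := Finsupp.sum_single_index rfl

lemma coeff_substPS (s : MvPowerSeries τ R) (hs : OrdGe s 1) (g : PowerSeries R)
    (d : τ →₀ ℕ) (N : ℕ) (hN : (d.sum fun _ n => n) ≤ N) :
    MvPowerSeries.coeff d (PowerSeries.substitute s g) =
      ∑ k ∈ Finset.range (N + 1),
        PowerSeries.coeff k g * MvPowerSeries.coeff d (s ^ k) := by
  classical
  rw [PowerSeries.substitute, coeff_substitute_eq_sum _ (fun _ => hs) g d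
    ((Finset.range (N + 1)).image (Finsupp.single ())) ?_]
  · rw [Finset.sum_image (fun p _ q _ h => Finsupp.single_injective () h)]
    apply Finset.sum_congr rfl
    intro k _
    rw [Finsupp.prod_single_index (h := fun _ n => s ^ n) (pow_zero s)]
    rfl
  · intro e he
    have h1 : (e.sum fun _ n => n) = e () := by
      conv_lhs => rw [Finsupp.unique_single e]
      exact deg_single _ _
    rw [Finset.mem_image]
    exact ⟨e (), Finset.mem_range.2 (by omega), (Finsupp.unique_single e).symm⟩

lemma fin2_decomp (e : Fin 2 →₀ ℕ) :
    e = Finsupp.single 0 (e 0) + Finsupp.single 1 (e 1) := by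
  ext i
  fin_cases i <;> simp [Finsupp.single_apply]

lemma eval0 (p q : ℕ) :
    ((Finsupp.single (0 : Fin 2) p + Finsupp.single (1 : Fin 2) q : Fin 2 →₀ ℕ)) 0 = p := by
  simp [Finsupp.single_apply]

lemma eval1 (p q : ℕ) :
    ((Finsupp.single (0 : Fin 2) p + Finsupp.single (1 : Fin 2) q : Fin 2 →₀ ℕ)) 1 = q := by
  simp [Finsupp.single_apply]

lemma deg_fin2 (e : Fin 2 →₀ ℕ) : (e.sum fun _ n => n) = e 0 + e 1 := by
  conv_lhs => rw [fin2_decomp e]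
  rw [deg_add, deg_single, deg_single]

lemma prod_fin2 (a : Fin 2 → MvPowerSeries τ R) (e : Fin 2 →₀ ℕ) :
    (e.prod fun s n => a s ^ n) = a 0 ^ e 0 * a 1 ^ e 1 := by
  rw [Finsupp.prod_fintype _ _ (fun i => pow_zero (a i)), Fin.prod_univ_two]

lemma coeff_substFin2 (a : Fin 2 → MvPowerSeries τ R) (ha : ∀ i, OrdGe (a i) 1)
    (f : MvPowerSeries (Fin 2) R) (d : τ →₀ ℕ) (N : ℕ) (hN : (d.sum fun _ n => n) ≤ N) :
    MvPowerSeries.coeff d (MvPowerSeries.substitute a f) =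
      ∑ p ∈ Finset.range (N + 1) ×ˢ Finset.range (N + 1),
        MvPowerSeries.coeff (Finsupp.single 0 p.1 + Finsupp.single 1 p.2) f *
          MvPowerSeries.coeff d (a 0 ^ p.1 * a 1 ^ p.2) := by
  classical
  rw [coeff_substitute_eq_sum a ha f d
    ((Finset.range (N + 1) ×ˢ Finset.range (N + 1)).image
      fun p => Finsupp.single 0 p.1 + Finsupp.single 1 p.2) ?_]
  · rw [Finset.sum_image ?_]
    · apply Finset.sum_congr rfl
      intro p _
      rw [prod_fin2, eval0, eval1]
    · intro p _ q _ hpq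
      have h0 := congrArg (fun e : Fin 2 →₀ ℕ => e 0) hpq
      have h1 := congrArg (fun e : Fin 2 →₀ ℕ => e 1) hpq
      simp only [eval0, eval1] at h0 h1
      exact Prod.ext h0 h1
  · intro e he
    have h1 := deg_fin2 e
    rw [Finset.mem_image]
    refine ⟨(e 0, e 1), Finset.mem_product.2 ⟨Finset.mem_range.2 (by omega),
      Finset.mem_range.2 (by omega)⟩, (fin2_decomp e).symm⟩

end Spec
section XO
variable {R : Type*} [CommRing R]

def Xonly (i : Fin 2) (f : MvPowerSeries (Fin 2) R) : Prop :=
  ∀ p : Fin 2 →₀ ℕ, p ≠ Finsupp.single i (p i) → MvPowerSeries.coeff p f = 0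

lemma fin2_other {i j : Fin 2} (hij : j ≠ i) {p : Fin 2 →₀ ℕ} (hp : p j = 0)
    (hq : ∀ j', j' ≠ i → j' ≠ j → p j' = 0) : p = Finsupp.single i (p i) := by
  ext a
  rcases eq_or_ne a i with rfl | hai
  · simp [Finsupp.single_eq_same]
  · rw [Finsupp.single_eq_of_ne' (Ne.symm hai)]
    rcases eq_or_ne a j with rfl | haj
    · exact hp
    · exact hq a hai haj

lemma not_Xonly_exists {i : Fin 2} {p : Fin 2 →₀ ℕ}
    (hp : p ≠ Finsupp.single i (p i)) : ∃ j, j ≠ i ∧ p j ≠ 0 := by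
  by_contra hc
  push_neg at hc
  exact hp (by
    ext a
    rcases eq_or_ne a i with rfl | hai
    · simp [Finsupp.single_eq_same]
    · rw [Finsupp.single_eq_of_ne' (Ne.symm hai)]; exact hc a hai)

lemma Xonly.one (i : Fin 2) : Xonly (R := R) i 1 := by
  classical
  intro p hp
  rw [MvPowerSeries.coeff_one, if_neg]
  intro h0
  exact hp (by rw [h0]; simp)

lemma Xonly.mul {i : Fin 2} {f g : MvPowerSeries (Fin 2) R}
    (hf : Xonly i f) (hg : Xonly i g) : Xonly i (f * g) := by
  classical
  intro p hp
  rw [MvPowerSeries.coeff_mul]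
  apply Finset.sum_eq_zero
  rintro ⟨u, v⟩ huv
  have huv' : u + v = p := Finset.HasAntidiagonal.mem_antidiagonal.1 huv
  obtain ⟨j, hji, hpj⟩ := not_Xonly_exists hp
  have : u j ≠ 0 ∨ v j ≠ 0 := by
    by_contra hc
    push_neg at hc
    apply hpj
    rw [← huv']
    simp [hc.1, hc.2]
  rcases this with hu | hv
  · rw [hf u (fun hu' => hu (by rw [hu', Finsupp.single_eq_of_ne' (Ne.symm hji)])), zero_mul]
  · rw [hg v (fun hv' => hv (by rw [hv', Finsupp.single_eq_of_ne' (Ne.symm hji)])), mul_zero]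

lemma Xonly.pow {i : Fin 2} {f : MvPowerSeries (Fin 2) R} (hf : Xonly i f) (n : ℕ) :
    Xonly i (f ^ n) := by
  induction n with
  | zero => simpa using Xonly.one i
  | succ k ih => rw [pow_succ]; exact ih.mul hf

lemma coeff_mul_Xonly {f g : MvPowerSeries (Fin 2) R}
    (hf : Xonly 0 f) (hg : Xonly 1 g) (d : Fin 2 →₀ ℕ) :
    MvPowerSeries.coeff d (f * g) =
      MvPowerSeries.coeff (Finsupp.single 0 (d 0)) f *
        MvPowerSeries.coeff (Finsupp.single 1 (d 1)) g := by
  classical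
  rw [MvPowerSeries.coeff_mul]
  apply Finset.sum_eq_single_of_mem (Finsupp.single 0 (d 0), Finsupp.single 1 (d 1))
  · exact Finset.HasAntidiagonal.mem_antidiagonal.2 (fin2_decomp d).symm
  · rintro ⟨u, v⟩ huv hne
    have huv' : u + v = d := Finset.HasAntidiagonal.mem_antidiagonal.1 huv
    rcases eq_or_ne u (Finsupp.single 0 (u 0)) with hu | hu
    · rcases eq_or_ne v (Finsupp.single 1 (v 1)) with hv | hv
      · exfalso
        apply hne
        have hu1 : u 1 = 0 := by rw [hu]; exact Finsupp.single_eq_of_ne' (by decide)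
        have hv0 : v 0 = 0 := by rw [hv]; exact Finsupp.single_eq_of_ne' (by decide)
        have hd0 : d 0 = u 0 := by rw [← huv']; simp [hv0]
        have hd1 : d 1 = v 1 := by rw [← huv']; simp [hu1]
        rw [Prod.ext_iff, hd0, hd1]
        exact ⟨hu, hv⟩
      · rw [hg v hv, mul_zero]
    · rw [hf u hu, zero_mul]

lemma coeff_T (h : PowerSeries R) (hh0 : PowerSeries.constantCoeff h = 0)
    (i : Fin 2) (d : Fin 2 →₀ ℕ) :
    MvPowerSeries.coeff d
        (PowerSeries.substitute (MvPowerSeries.X i : MvPowerSeries (Fin 2) R) h) =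
      if d = Finsupp.single i (d i) then PowerSeries.coeff (d i) h else 0 := by
  classical
  have hord : OrdGe (MvPowerSeries.X i : MvPowerSeries (Fin 2) R) 1 :=
    ordGe_of_constantCoeff (MvPowerSeries.constantCoeff_X i)
  rw [coeff_substPS _ hord h d (d.sum fun _ n => n) le_rfl]
  split_ifs with hd
  · rw [Finset.sum_eq_single (d i)]
    · rw [MvPowerSeries.coeff_X_pow, if_pos hd, mul_one]
    · intro k _ hk
      rw [MvPowerSeries.coeff_X_pow, if_neg, mul_zero]
      intro hdk
      exact hk (by rw [hdk, Finsupp.single_eq_same])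
    · intro hmem
      exfalso
      apply hmem
      rw [Finset.mem_range]
      have : d i ≤ d.sum fun _ n => n := by
        conv_rhs => rw [hd]
        rw [deg_single]
      omega
  · apply Finset.sum_eq_zero
    intro k _
    rw [MvPowerSeries.coeff_X_pow, if_neg, mul_zero]
    intro hdk
    exact hd (by rw [hdk, Finsupp.single_eq_same, ← hdk])

end XO
section NE

lemma se00 : (Finsupp.single (0 : Fin 2) 1 : Fin 2 →₀ ℕ) 0 = 1 := Finsupp.single_eq_same
lemma se01 : (Finsupp.single (0 : Fin 2) 1 : Fin 2 →₀ ℕ) 1 = 0 :=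
  Finsupp.single_eq_of_ne' (by decide)
lemma se10 : (Finsupp.single (1 : Fin 2) 1 : Fin 2 →₀ ℕ) 0 = 0 :=
  Finsupp.single_eq_of_ne' (by decide)
lemma se11 : (Finsupp.single (1 : Fin 2) 1 : Fin 2 →₀ ℕ) 1 = 1 := Finsupp.single_eq_same

lemma hne_x0 : (Finsupp.single (0 : Fin 2) 1 : Fin 2 →₀ ℕ) ≠ 0 := by
  intro hh
  have := congrArg (fun e : Fin 2 →₀ ℕ => e 0) hh
  simp [Finsupp.single_eq_same] at this

lemma hne_y0 : (Finsupp.single (1 : Fin 2) 1 : Fin 2 →₀ ℕ) ≠ 0 := by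
  intro hh
  have := congrArg (fun e : Fin 2 →₀ ℕ => e 1) hh
  simp [Finsupp.single_eq_same] at this

lemma hne_xy0 :
    (Finsupp.single (0 : Fin 2) 1 + Finsupp.single (1 : Fin 2) 1 : Fin 2 →₀ ℕ) ≠ 0 := by
  intro hh
  have := congrArg (fun e : Fin 2 →₀ ℕ => e 0) hh
  simp only [eval0] at this
  simp at this

lemma hne_xy : (Finsupp.single (0 : Fin 2) 1 : Fin 2 →₀ ℕ) ≠ Finsupp.single (1 : Fin 2) 1 := by
  intro hh
  have := congrArg (fun e : Fin 2 →₀ ℕ => e 0) hh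
  simp [Finsupp.single_apply] at this

lemma hne_xyx :
    (Finsupp.single (0 : Fin 2) 1 + Finsupp.single (1 : Fin 2) 1 : Fin 2 →₀ ℕ) ≠
      Finsupp.single (0 : Fin 2) 1 := by
  intro hh
  have := congrArg (fun e : Fin 2 →₀ ℕ => e 1) hh
  simp only [eval1] at this
  simp [Finsupp.single_apply] at this

lemma hne_xyy :
    (Finsupp.single (0 : Fin 2) 1 + Finsupp.single (1 : Fin 2) 1 : Fin 2 →₀ ℕ) ≠
      Finsupp.single (1 : Fin 2) 1 := by
  intro hh
  have := congrArg (fun e : Fin 2 →₀ ℕ => e 0) hh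
  simp only [eval0] at this
  simp [Finsupp.single_apply] at this

lemma antidiag_xy :
    Finset.HasAntidiagonal.antidiagonal
        (Finsupp.single (0 : Fin 2) 1 + Finsupp.single (1 : Fin 2) 1 : Fin 2 →₀ ℕ) =
      {((0 : Fin 2 →₀ ℕ), Finsupp.single (0 : Fin 2) 1 + Finsupp.single (1 : Fin 2) 1),
        (Finsupp.single (0 : Fin 2) 1, Finsupp.single (1 : Fin 2) 1),
        (Finsupp.single (1 : Fin 2) 1, Finsupp.single (0 : Fin 2) 1),
        (Finsupp.single (0 : Fin 2) 1 + Finsupp.single (1 : Fin 2) 1, (0 : Fin 2 →₀ ℕ))} := by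
  ext ⟨u, v⟩
  simp only [Finset.HasAntidiagonal.mem_antidiagonal, Finset.mem_insert, Finset.mem_singleton, Prod.mk.injEq]
  constructor
  · intro huv
    have h0 := congrArg (fun e : Fin 2 →₀ ℕ => e 0) huv
    have h1 := congrArg (fun e : Fin 2 →₀ ℕ => e 1) huv
    simp only [Finsupp.add_apply, se00, se01, se10, se11, add_zero, zero_add] at h0 h1
    have hu := fin2_decomp u
    have hv := fin2_decomp v
    rcases (by omega : u 0 = 0 ∧ v 0 = 1 ∨ u 0 = 1 ∧ v 0 = 0) with ⟨a, b⟩ | ⟨a, b⟩ <;>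
      rcases (by omega : u 1 = 0 ∧ v 1 = 1 ∨ u 1 = 1 ∧ v 1 = 0) with ⟨c, e⟩ | ⟨c, e⟩ <;>
      rw [a, c] at hu <;> rw [b, e] at hv <;>
      simp only [Finsupp.single_zero, zero_add, add_zero] at hu hv <;>
      simp [hu, hv]
  · rintro (⟨rfl, rfl⟩ | ⟨rfl, rfl⟩ | ⟨rfl, rfl⟩ | ⟨rfl, rfl⟩) <;> abel

end NE

/-- Let `R` be a commutative ring, `F ∈ R⟦x,y⟧` with zero constant
coefficient, with the coefficients of `x` and `y` both `1`, and with `F(x,0) = x`,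
`F(0,y) = y`.  Let `g, h ∈ R⟦z⟧` have zero constant coefficients, the coefficient
of `z` in `g` be `1`, and `g(h(z)) = z`, `h(g(z)) = z`.  Put
`G(x,y) = g(F(h(x), h(y)))`.  Then the coefficient of `x·y` in `G` equals the
coefficient of `x·y` in `F` plus `2` times the coefficient of `z²` in `g`. -/
theorem stmt2 {R : Type*} [CommRing R] (F : MvPowerSeries (Fin 2) R)
    (hF0 : MvPowerSeries.coeff 0 F = 0)
    (hFx : MvPowerSeries.coeff (Finsupp.single (0 : Fin 2) 1) F = 1)
    (hFy : MvPowerSeries.coeff (Finsupp.single (1 : Fin 2) 1) F = 1)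
    (hFx0 : MvPowerSeries.substitute ![MvPowerSeries.X 0, 0] F = MvPowerSeries.X 0)
    (hF0y : MvPowerSeries.substitute ![0, MvPowerSeries.X 1] F = MvPowerSeries.X 1)
    (g h : PowerSeries R)
    (hg0 : PowerSeries.constantCoeff g = 0)
    (hh0 : PowerSeries.constantCoeff h = 0)
    (hg1 : PowerSeries.coeff 1 g = 1)
    (hgh : PowerSeries.substitute h g = PowerSeries.X)
    (hhg : PowerSeries.substitute g h = PowerSeries.X)
    (G : MvPowerSeries (Fin 2) R)
    (hG : G = PowerSeries.substitute
      (MvPowerSeries.substitute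
        ![PowerSeries.substitute (MvPowerSeries.X 0) h,
          PowerSeries.substitute (MvPowerSeries.X 1) h] F) g) :
    MvPowerSeries.coeff (Finsupp.single (0 : Fin 2) 1 + Finsupp.single (1 : Fin 2) 1) G =
      MvPowerSeries.coeff
          (Finsupp.single (0 : Fin 2) 1 + Finsupp.single (1 : Fin 2) 1) F +
        2 * PowerSeries.coeff 2 g := by
  classical
  -- the coefficient of z in h is 1
  have hh1 : PowerSeries.coeff 1 h = 1 := by
    have hcong := congrArg (MvPowerSeries.coeff (Finsupp.single () 1)) hgh
    rw [coeff_substPS h (ordGe_of_constantCoeff hh0) g (Finsupp.single () 1) 1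
      (by rw [deg_single])] at hcong
    rw [Finset.sum_range_succ, Finset.sum_range_one, pow_zero, pow_one,
      MvPowerSeries.coeff_one, if_neg (fun hz => one_ne_zero (Finsupp.single_eq_zero.1 hz)), mul_zero,
      zero_add, hg1, one_mul] at hcong
    rw [show MvPowerSeries.coeff (Finsupp.single () 1) (PowerSeries.X : PowerSeries R) = 1
      from PowerSeries.coeff_one_X] at hcong
    exact hcong
  -- coefficients of the substituted series h(X i)
  have hT := coeff_T h hh0
  have hTord : ∀ i : Fin 2,
      OrdGe (PowerSeries.substitute (MvPowerSeries.X i : MvPowerSeries (Fin 2) R) h) 1 := by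
    intro i
    apply ordGe_of_constantCoeff
    have h2 := hT i 0
    rw [show ((0 : Fin 2 →₀ ℕ) i) = 0 from rfl, Finsupp.single_zero, if_pos rfl] at h2
    rw [← MvPowerSeries.coeff_zero_eq_constantCoeff_apply, h2,
      PowerSeries.coeff_zero_eq_constantCoeff_apply, hh0]
  have hXonly : ∀ i : Fin 2,
      Xonly i (PowerSeries.substitute (MvPowerSeries.X i : MvPowerSeries (Fin 2) R) h) := by
    intro i p hp
    rw [hT i p, if_neg hp]
  -- constant coefficients of powers
  have hc0 : ∀ p : ℕ, MvPowerSeries.coeff (0 : Fin 2 →₀ ℕ)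
      ((PowerSeries.substitute (MvPowerSeries.X 0 : MvPowerSeries (Fin 2) R) h) ^ p) =
      if p = 0 then 1 else 0 := by
    intro p
    rcases p with _ | q
    · rw [pow_zero, MvPowerSeries.coeff_zero_one, if_pos rfl]
    · rw [if_neg (Nat.succ_ne_zero q)]
      exact (hTord 0).pow (q + 1) 0 (by rw [Finsupp.sum_zero_index]; omega)
  have hc1 : ∀ p : ℕ, MvPowerSeries.coeff (0 : Fin 2 →₀ ℕ)
      ((PowerSeries.substitute (MvPowerSeries.X 1 : MvPowerSeries (Fin 2) R) h) ^ p) =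
      if p = 0 then 1 else 0 := by
    intro p
    rcases p with _ | q
    · rw [pow_zero, MvPowerSeries.coeff_zero_one, if_pos rfl]
    · rw [if_neg (Nat.succ_ne_zero q)]
      exact (hTord 1).pow (q + 1) 0 (by rw [Finsupp.sum_zero_index]; omega)
  -- linear coefficients of powers
  have hlin : ∀ i : Fin 2, ∀ p : ℕ, MvPowerSeries.coeff (Finsupp.single i 1)
      ((PowerSeries.substitute (MvPowerSeries.X i : MvPowerSeries (Fin 2) R) h) ^ p) =
      if p = 1 then 1 else 0 := by
    intro i p
    match p with
    | 0 =>
        rw [pow_zero, MvPowerSeries.coeff_one,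
          if_neg (fun hz => one_ne_zero (Finsupp.single_eq_zero.1 hz)), if_neg (by omega)]
    | 1 =>
        rw [pow_one, hT i, Finsupp.single_eq_same, if_pos rfl, hh1, if_pos rfl]
    | (q + 2) =>
        rw [if_neg (by omega)]
        exact (hTord i).pow (q + 2) _ (by rw [deg_single]; omega)
  have hl0 := hlin 0
  have hl1 := hlin 1
  -- the product coefficient formula
  have hprod : ∀ (d : Fin 2 →₀ ℕ) (p q : ℕ),
      MvPowerSeries.coeff d
        ((PowerSeries.substitute (MvPowerSeries.X 0 : MvPowerSeries (Fin 2) R) h) ^ p *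
          (PowerSeries.substitute (MvPowerSeries.X 1 : MvPowerSeries (Fin 2) R) h) ^ q) =
      MvPowerSeries.coeff (Finsupp.single 0 (d 0))
          ((PowerSeries.substitute (MvPowerSeries.X 0 : MvPowerSeries (Fin 2) R) h) ^ p) *
        MvPowerSeries.coeff (Finsupp.single 1 (d 1))
          ((PowerSeries.substitute (MvPowerSeries.X 1 : MvPowerSeries (Fin 2) R) h) ^ q) :=
    fun d p q => coeff_mul_Xonly ((hXonly 0).pow p) ((hXonly 1).pow q) d
  have haord : ∀ i : Fin 2,
      OrdGe ((![PowerSeries.substitute (MvPowerSeries.X 0) h,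
        PowerSeries.substitute (MvPowerSeries.X 1) h] :
          Fin 2 → MvPowerSeries (Fin 2) R) i) 1 := by
    intro i
    fin_cases i
    · exact hTord 0
    · exact hTord 1
  -- coefficients of S = F(h(x), h(y))
  have hS0 : MvPowerSeries.coeff (0 : Fin 2 →₀ ℕ)
      (MvPowerSeries.substitute
        ![PowerSeries.substitute (MvPowerSeries.X 0) h,
          PowerSeries.substitute (MvPowerSeries.X 1) h] F) = 0 := by
    rw [coeff_substFin2 _ haord F 0 0 (by rw [Finsupp.sum_zero_index])]
    simp only [Finset.sum_product, Finset.sum_range_one, Matrix.cons_val_zero,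
      Matrix.cons_val_one, Matrix.head_cons, hprod, Finsupp.coe_zero, Pi.zero_apply,
      Finsupp.single_zero, zero_add, add_zero, hc0, hc1, hF0, if_pos rfl]
    ring
  have hSx : MvPowerSeries.coeff (Finsupp.single (0 : Fin 2) 1)
      (MvPowerSeries.substitute
        ![PowerSeries.substitute (MvPowerSeries.X 0) h,
          PowerSeries.substitute (MvPowerSeries.X 1) h] F) = 1 := by
    rw [coeff_substFin2 _ haord F _ 1 (by rw [deg_single])]
    simp only [Finset.sum_product, Finset.sum_range_succ, Finset.sum_range_one,
      Matrix.cons_val_zero, Matrix.cons_val_one, Matrix.head_cons, hprod, se00, se01,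
      Finsupp.single_zero, zero_add, add_zero, hc0, hc1, hl0, hF0, hFx]
    norm_num
  have hSy : MvPowerSeries.coeff (Finsupp.single (1 : Fin 2) 1)
      (MvPowerSeries.substitute
        ![PowerSeries.substitute (MvPowerSeries.X 0) h,
          PowerSeries.substitute (MvPowerSeries.X 1) h] F) = 1 := by
    rw [coeff_substFin2 _ haord F _ 1 (by rw [deg_single])]
    simp only [Finset.sum_product, Finset.sum_range_succ, Finset.sum_range_one,
      Matrix.cons_val_zero, Matrix.cons_val_one, Matrix.head_cons, hprod, se10, se11,
      Finsupp.single_zero, zero_add, add_zero, hc0, hc1, hl1, hF0, hFy]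
    norm_num
  have hSxy : MvPowerSeries.coeff
      (Finsupp.single (0 : Fin 2) 1 + Finsupp.single (1 : Fin 2) 1)
      (MvPowerSeries.substitute
        ![PowerSeries.substitute (MvPowerSeries.X 0) h,
          PowerSeries.substitute (MvPowerSeries.X 1) h] F) =
      MvPowerSeries.coeff
        (Finsupp.single (0 : Fin 2) 1 + Finsupp.single (1 : Fin 2) 1) F := by
    rw [coeff_substFin2 _ haord F _ 2 (by rw [deg_add, deg_single, deg_single])]
    simp only [Finset.sum_product, Finset.sum_range_succ, Finset.sum_range_one,
      Matrix.cons_val_zero, Matrix.cons_val_one, Matrix.head_cons, hprod, eval0, eval1,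
      Finsupp.single_zero, zero_add, add_zero, hc0, hc1, hl0, hl1, hF0]
    norm_num
  have hSord : OrdGe (MvPowerSeries.substitute
      ![PowerSeries.substitute (MvPowerSeries.X 0) h,
        PowerSeries.substitute (MvPowerSeries.X 1) h] F : MvPowerSeries (Fin 2) R) 1 :=
    ordGe_of_constantCoeff hS0
  -- the square of S
  have hS2 : MvPowerSeries.coeff
      (Finsupp.single (0 : Fin 2) 1 + Finsupp.single (1 : Fin 2) 1)
      ((MvPowerSeries.substitute
        ![PowerSeries.substitute (MvPowerSeries.X 0) h,
          PowerSeries.substitute (MvPowerSeries.X 1) h] F) ^ 2) = 2 := by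
    rw [pow_two, MvPowerSeries.coeff_mul, antidiag_xy]
    rw [Finset.sum_insert (by
      intro hmem
      simp only [Finset.mem_insert, Finset.mem_singleton, Prod.mk.injEq] at hmem
      rcases hmem with ⟨h1, _⟩ | ⟨h1, _⟩ | ⟨h1, _⟩
      · exact hne_x0 h1.symm
      · exact hne_y0 h1.symm
      · exact hne_xy0 h1.symm)]
    rw [Finset.sum_insert (by
      intro hmem
      simp only [Finset.mem_insert, Finset.mem_singleton, Prod.mk.injEq] at hmem
      rcases hmem with ⟨h1, _⟩ | ⟨h1, _⟩
      · exact hne_xy h1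
      · exact hne_xyx h1.symm)]
    rw [Finset.sum_insert (by
      intro hmem
      simp only [Finset.mem_singleton, Prod.mk.injEq] at hmem
      exact hne_xyy hmem.1.symm)]
    rw [Finset.sum_singleton]
    rw [hS0, hSx, hSy, hSxy, zero_mul, mul_zero]
    ring
  -- now compute the coefficient of xy in G
  rw [hG, coeff_substPS _ hSord g (Finsupp.single (0 : Fin 2) 1 + Finsupp.single (1 : Fin 2) 1) 2 (by rw [deg_add, deg_single, deg_single])]
  rw [Finset.sum_range_succ, Finset.sum_range_succ, Finset.sum_range_one]
  rw [pow_zero, pow_one, MvPowerSeries.coeff_one, if_neg hne_xy0, mul_zero, zero_add]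
  rw [hg1, one_mul, hSxy, hS2]
  ring
end

section
/- Let R be a commutative ring and let F ∈ R⟦x,y⟧ be a formal power series in two variables with zero constant coefficient and with the coefficients of x and of y both equal to 1, and let [n]_F(t) be the associated n-series. Let k be a natural number such that k·1_R is a unit of R. Then [k]_F(t) = t·u for some unit u of the power series ring R⟦t⟧, whose constant coefficient is k·1_R. -/
/-- The `n`-series `[n]_F(t)` of a two-variable formal power series `F ∈ R⟦x,y⟧`,
defined recursively by `[0]_F(t) = 0` and `[n+1]_F(t) = F([n]_F(t), t)`. -/
noncomputable def MvPowerSeries.nSeries {R : Type*} [CommRing R]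
    (F : MvPowerSeries (Fin 2) R) : ℕ → PowerSeries R
  | 0 => 0
  | n + 1 => MvPowerSeries.substitute ![MvPowerSeries.nSeries F n, PowerSeries.X] F

section Aux

variable {τ R : Type*} [CommRing R]

lemma aux_wt_add (p q : τ →₀ ℕ) :
    ((p + q).sum fun _ i => i) = (p.sum fun _ i => i) + (q.sum fun _ i => i) :=
  Finsupp.sum_add_index' (fun _ => rfl) (fun _ _ _ => rfl)

lemma aux_wt_eq_zero {d : τ →₀ ℕ} (h : d.sum (fun _ i => i) = 0) : d = 0 := by
  ext a
  simp only [Finsupp.coe_zero, Pi.zero_apply]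
  by_contra ha
  have hmem : a ∈ d.support := Finsupp.mem_support_iff.mpr ha
  have : d a ≤ d.sum fun _ i => i := Finset.single_le_sum (fun _ _ => Nat.zero_le _) hmem
  omega

lemma aux_ord_mul {f g : MvPowerSeries τ R} {m n : ℕ}
    (hf : ∀ d : τ →₀ ℕ, (d.sum fun _ i => i) < m → MvPowerSeries.coeff d f = 0)
    (hg : ∀ d : τ →₀ ℕ, (d.sum fun _ i => i) < n → MvPowerSeries.coeff d g = 0) :
    ∀ d : τ →₀ ℕ, (d.sum fun _ i => i) < m + n → MvPowerSeries.coeff d (f * g) = 0 := by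
  classical
  intro d hd
  rw [MvPowerSeries.coeff_mul]
  apply Finset.sum_eq_zero
  intro p hp
  have hpq : p.1 + p.2 = d := Finset.HasAntidiagonal.mem_antidiagonal.mp hp
  have hw : (p.1.sum fun _ i => i) + (p.2.sum fun _ i => i) = d.sum fun _ i => i := by
    rw [← aux_wt_add, hpq]
  rcases Nat.lt_or_ge (p.1.sum fun _ i => i) m with h1 | h1
  · rw [hf _ h1, zero_mul]
  · rw [hg _ (by omega), mul_zero]

lemma aux_ord_prod {σ : Type*} (s : Finset σ) (g : σ → MvPowerSeries τ R) (m : σ → ℕ)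
    (h : ∀ i ∈ s, ∀ d : τ →₀ ℕ, (d.sum fun _ i => i) < m i → MvPowerSeries.coeff d (g i) = 0) :
    ∀ d : τ →₀ ℕ, (d.sum fun _ i => i) < ∑ i ∈ s, m i →
      MvPowerSeries.coeff d (∏ i ∈ s, g i) = 0 := by
  classical
  induction s using Finset.cons_induction with
  | empty =>
    intro d hd
    simp only [Finset.sum_empty] at hd
    omega
  | cons a s ha ih =>
    intro d hd
    rw [Finset.prod_cons]
    rw [Finset.sum_cons] at hd
    exact aux_ord_mul (h a (Finset.mem_cons_self _ _))
      (ih (fun i hi => h i (Finset.mem_cons_of_mem hi))) d hd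

lemma aux_ord_pow {f : MvPowerSeries τ R} (hf : MvPowerSeries.constantCoeff f = 0) (n : ℕ) :
    ∀ d : τ →₀ ℕ, (d.sum fun _ i => i) < n → MvPowerSeries.coeff d (f ^ n) = 0 := by
  induction n with
  | zero => intro d hd; omega
  | succ n ih =>
    intro d hd
    rw [pow_succ]
    refine aux_ord_mul (n := 1) ih (fun e he => ?_) d (by omega)
    have : e = 0 := aux_wt_eq_zero (by omega)
    subst this
    exact hf

lemma aux_ord_finprod {σ : Type*} (a : σ → MvPowerSeries τ R)
    (ha : ∀ s, MvPowerSeries.constantCoeff (a s) = 0) (e : σ →₀ ℕ) :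
    ∀ d : τ →₀ ℕ, (d.sum fun _ i => i) < (e.sum fun _ i => i) →
      MvPowerSeries.coeff d (e.prod fun s n => a s ^ n) = 0 := by
  intro d hd
  exact aux_ord_prod e.support (fun s => a s ^ e s) (fun s => e s)
    (fun s _ => aux_ord_pow (ha s) (e s)) d hd

end Aux

section SubstCoeff

variable {R : Type*} [CommRing R]

lemma subst_constantCoeff (a : Fin 2 → PowerSeries R)
    (ha : ∀ s, PowerSeries.constantCoeff (a s) = 0) (f : MvPowerSeries (Fin 2) R) :
    PowerSeries.constantCoeff (MvPowerSeries.substitute a f) = MvPowerSeries.coeff 0 f := by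
  have hdef : PowerSeries.constantCoeff (MvPowerSeries.substitute a f)
      = ∑ᶠ e : Fin 2 →₀ ℕ, MvPowerSeries.coeff e f *
          MvPowerSeries.coeff (0 : Unit →₀ ℕ) (e.prod fun s n => a s ^ n) := rfl
  rw [hdef, finsum_eq_single _ 0]
  · simp [Finsupp.prod_zero_index, MvPowerSeries.coeff_one]
  · intro e he
    have h0 : ((0 : Unit →₀ ℕ).sum fun _ i => i) = 0 := Finsupp.sum_zero_index
    have hne : (e.sum fun _ i => i) ≠ 0 := fun h => he (aux_wt_eq_zero h)
    rw [aux_ord_finprod a ha e _ (by omega), mul_zero]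

lemma wt_le_one_cases (e : Fin 2 →₀ ℕ) (h : (e.sum fun _ i => i) ≤ 1) :
    e = 0 ∨ e = Finsupp.single 0 1 ∨ e = Finsupp.single 1 1 := by
  have hsum : (e.sum fun _ i => i) = e 0 + e 1 := by
    rw [Finsupp.sum_fintype _ _ (fun _ => rfl)]
    simp [Fin.sum_univ_two]
  rw [hsum] at h
  rcases Nat.lt_or_ge (e 0) 1 with h0 | h0
  · rcases Nat.lt_or_ge (e 1) 1 with h1 | h1
    · left; ext i
      simp only [Finsupp.coe_zero, Pi.zero_apply]
      match i with
      | 0 => omega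
      | 1 => omega
    · right; right; ext i
      match i with
      | 0 => simp [Finsupp.single_apply]; omega
      | 1 => simp [Finsupp.single_apply]; omega
  · right; left; ext i
    match i with
    | 0 => simp [Finsupp.single_apply]; omega
    | 1 => simp [Finsupp.single_apply]; omega

lemma prod_single_pow (a : Fin 2 → PowerSeries R) (i : Fin 2) :
    ((Finsupp.single i 1).prod fun s n => a s ^ n) = a i := by
  classical
  rw [Finsupp.prod, Finsupp.support_single_ne_zero _ one_ne_zero, Finset.prod_singleton,
    Finsupp.single_eq_same, pow_one]

lemma subst_coeff_one (a : Fin 2 → PowerSeries R)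
    (ha : ∀ s, PowerSeries.constantCoeff (a s) = 0) (f : MvPowerSeries (Fin 2) R) :
    PowerSeries.coeff 1 (MvPowerSeries.substitute a f)
      = MvPowerSeries.coeff (Finsupp.single 0 1) f * PowerSeries.coeff 1 (a 0)
        + MvPowerSeries.coeff (Finsupp.single 1 1) f * PowerSeries.coeff 1 (a 1) := by
  classical
  have hdef : PowerSeries.coeff 1 (MvPowerSeries.substitute a f)
      = ∑ᶠ e : Fin 2 →₀ ℕ, MvPowerSeries.coeff e f *
          MvPowerSeries.coeff (Finsupp.single () 1) (e.prod fun s n => a s ^ n) := rfl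
  have hne1 : (Finsupp.single (0 : Fin 2) 1) ≠ (0 : Fin 2 →₀ ℕ) := by
    simp [Finsupp.single_eq_zero]
  have hne2 : (Finsupp.single (1 : Fin 2) 1) ≠ (0 : Fin 2 →₀ ℕ) := by
    simp [Finsupp.single_eq_zero]
  have hne3 : (Finsupp.single (0 : Fin 2) 1) ≠ Finsupp.single (1 : Fin 2) 1 := by
    intro h
    have := DFunLike.congr_fun h (0 : Fin 2)
    simp [Finsupp.single_apply] at this
  rw [hdef, finsum_eq_sum_of_support_subset _
    (s := ({0, Finsupp.single 0 1, Finsupp.single 1 1} : Finset (Fin 2 →₀ ℕ)))]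
  · rw [Finset.sum_insert (by simp [hne1.symm, hne2.symm]),
      Finset.sum_insert (by simp [hne3]), Finset.sum_singleton]
    have h0 : MvPowerSeries.coeff (Finsupp.single () 1)
        ((0 : Fin 2 →₀ ℕ).prod fun s n => a s ^ n) = 0 := by
      rw [Finsupp.prod_zero_index, MvPowerSeries.coeff_one]
      simp [Finsupp.single_eq_zero]
    rw [h0, prod_single_pow, prod_single_pow, mul_zero, zero_add]
    rfl
  · intro e he
    simp only [Function.mem_support] at he
    have hwt : (e.sum fun _ i => i) ≤ 1 := by
      by_contra hgt
      apply he
      have hone : ((Finsupp.single () 1 : Unit →₀ ℕ).sum fun _ i => i) = 1 :=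
        Finsupp.sum_single_index rfl
      rw [aux_ord_finprod a ha e _ (by omega), mul_zero]
    rcases wt_le_one_cases e hwt with h | h | h <;> simp [h]

end SubstCoeff

section NSeries

variable {R : Type*} [CommRing R]

lemma nSeries_constantCoeff (F : MvPowerSeries (Fin 2) R)
    (hF0 : MvPowerSeries.coeff 0 F = 0) (n : ℕ) :
    PowerSeries.constantCoeff (MvPowerSeries.nSeries F n) = 0 := by
  induction n with
  | zero => simp [MvPowerSeries.nSeries]
  | succ n ih =>
    rw [MvPowerSeries.nSeries, subst_constantCoeff _ ?_ F, hF0]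
    intro s
    fin_cases s <;> simp [ih, PowerSeries.constantCoeff_X]

lemma nSeries_coeff_one (F : MvPowerSeries (Fin 2) R)
    (hF0 : MvPowerSeries.coeff 0 F = 0)
    (hFx : MvPowerSeries.coeff (Finsupp.single (0 : Fin 2) 1) F = 1)
    (hFy : MvPowerSeries.coeff (Finsupp.single (1 : Fin 2) 1) F = 1) (n : ℕ) :
    PowerSeries.coeff 1 (MvPowerSeries.nSeries F n) = n • (1 : R) := by
  induction n with
  | zero => simp [MvPowerSeries.nSeries]
  | succ n ih =>
    rw [MvPowerSeries.nSeries, subst_coeff_one _ ?_ F]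
    · simp only [Matrix.cons_val_zero, Matrix.cons_val_one, Matrix.head_cons]
      rw [hFx, hFy, ih, PowerSeries.coeff_one_X]
      simp [add_smul]
    · intro s
      fin_cases s <;>
        simp [nSeries_constantCoeff F hF0, PowerSeries.constantCoeff_X]

end NSeries

/-- Let `R` be a commutative ring, `F ∈ R⟦x,y⟧` with zero constant
coefficient and coefficients of `x` and `y` both `1`, and `[n]_F` the associated
`n`-series.  Let `k` be a natural number such that `k • 1_R` is a unit of `R`.
Then `[k]_F(t) = t * u` for some unit `u` of `R⟦t⟧` whose constant coefficient is
`k • 1_R`. -/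
theorem stmt4 {R : Type*} [CommRing R] (F : MvPowerSeries (Fin 2) R)
    (hF0 : MvPowerSeries.coeff 0 F = 0)
    (hFx : MvPowerSeries.coeff (Finsupp.single (0 : Fin 2) 1) F = 1)
    (hFy : MvPowerSeries.coeff (Finsupp.single (1 : Fin 2) 1) F = 1)
    (k : ℕ) (hk : IsUnit (k • (1 : R))) :
    ∃ u : (PowerSeries R)ˣ,
      MvPowerSeries.nSeries F k = PowerSeries.X * (u : PowerSeries R) ∧
        PowerSeries.constantCoeff (u : PowerSeries R) = k • (1 : R) := by
  obtain ⟨v, hv⟩ := PowerSeries.X_dvd_iff.mpr (nSeries_constantCoeff F hF0 k)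
  have hcv : PowerSeries.constantCoeff v = k • (1 : R) := by
    have h := PowerSeries.coeff_succ_X_mul 0 v
    rw [← hv, nSeries_coeff_one F hF0 hFx hFy k] at h
    rw [← PowerSeries.coeff_zero_eq_constantCoeff_apply, ← h]
  have hvu : IsUnit v := PowerSeries.isUnit_iff_constantCoeff.mpr (hcv ▸ hk)
  exact ⟨hvu.unit, by rw [hv, IsUnit.unit_spec], by rw [IsUnit.unit_spec, hcv]⟩
end

section
/- Let R be a commutative ring and let F ∈ R⟦x,y⟧ be a formal power series in two variables with zero constant coefficient and with the coefficients of x and of y both equal to 1, and let [n]_F(t) be the associated n-series. Then for every natural number n ≥ 1, the product ∏_{k=1}^{n} [k]_F(t) ∈ R⟦t⟧ has vanishing coefficient of t^j for all j < n, and its coefficient of t^n equals n!·1_R. -/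
namespace Stmt5Aux

variable {R : Type*} [CommRing R]

lemma finsupp_prod_fin2 (a : Fin 2 → PowerSeries R) (e : Fin 2 →₀ ℕ) :
    (e.prod fun s n => a s ^ n) = a 0 ^ e 0 * a 1 ^ e 1 := by
  rw [Finsupp.prod_fintype _ _ (fun i => pow_zero (a i)), Fin.prod_univ_two]

lemma coeff_substitute (a : Fin 2 → PowerSeries R) (F : MvPowerSeries (Fin 2) R) (j : ℕ) :
    PowerSeries.coeff j (MvPowerSeries.substitute a F) =
      ∑ᶠ e : Fin 2 →₀ ℕ, MvPowerSeries.coeff e F *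
        PowerSeries.coeff j (a 0 ^ e 0 * a 1 ^ e 1) := by
  show MvPowerSeries.coeff (Finsupp.single () j) (MvPowerSeries.substitute a F) = _
  rw [MvPowerSeries.coeff_apply]
  show (∑ᶠ e : Fin 2 →₀ ℕ, _) = _
  congr 1 with e
  rw [finsupp_prod_fin2]
  rfl

lemma coeff_vanish (a : Fin 2 → PowerSeries R) (h : ∀ i, PowerSeries.constantCoeff (a i) = 0)
    (e : Fin 2 →₀ ℕ) (j : ℕ) (hj : j < e 0 + e 1) :
    PowerSeries.coeff j (a 0 ^ e 0 * a 1 ^ e 1) = 0 := by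
  have hdvd : (PowerSeries.X : PowerSeries R) ^ (e 0 + e 1) ∣ a 0 ^ e 0 * a 1 ^ e 1 := by
    rw [pow_add]
    exact mul_dvd_mul (pow_dvd_pow_of_dvd (PowerSeries.X_dvd_iff.2 (h 0)) _)
      (pow_dvd_pow_of_dvd (PowerSeries.X_dvd_iff.2 (h 1)) _)
  obtain ⟨g, hg⟩ := hdvd
  rw [hg, PowerSeries.coeff_X_pow_mul', if_neg (by omega)]

lemma coeff_zero_substitute (a : Fin 2 → PowerSeries R) (F : MvPowerSeries (Fin 2) R)
    (h : ∀ i, PowerSeries.constantCoeff (a i) = 0)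
    (hF0 : MvPowerSeries.coeff 0 F = 0) :
    PowerSeries.coeff 0 (MvPowerSeries.substitute a F) = 0 := by
  rw [coeff_substitute]
  rw [finsum_eq_single _ (0 : Fin 2 →₀ ℕ)]
  · simp [hF0]
  · intro e he
    have : 0 < e 0 + e 1 := by
      rcases Finsupp.support_nonempty_iff.2 he with ⟨i, hi⟩
      rw [Finsupp.mem_support_iff] at hi
      fin_cases i <;> simp at hi <;> omega
    rw [coeff_vanish a h e 0 this, mul_zero]

lemma coeff_one_substitute (a : Fin 2 → PowerSeries R) (F : MvPowerSeries (Fin 2) R)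
    (h : ∀ i, PowerSeries.constantCoeff (a i) = 0) :
    PowerSeries.coeff 1 (MvPowerSeries.substitute a F) =
      MvPowerSeries.coeff (Finsupp.single (0 : Fin 2) 1) F * PowerSeries.coeff 1 (a 0) +
      MvPowerSeries.coeff (Finsupp.single (1 : Fin 2) 1) F * PowerSeries.coeff 1 (a 1) := by
  rw [coeff_substitute]
  have hne : (Finsupp.single (0 : Fin 2) 1) ≠ Finsupp.single (1 : Fin 2) 1 := by
    intro hc
    have := DFunLike.congr_fun hc (0 : Fin 2)
    simp at this
  rw [finsum_eq_finset_sum_of_support_subset _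
    (s := {Finsupp.single (0 : Fin 2) 1, Finsupp.single (1 : Fin 2) 1})]
  · rw [Finset.sum_pair hne]
    simp [Finsupp.single_apply]
  · intro e he
    simp only [Finset.coe_insert, Finset.coe_singleton, Set.mem_insert_iff,
      Set.mem_singleton_iff]
    by_contra hc
    push_neg at hc
    obtain ⟨h1, h2⟩ := hc
    apply he
    show MvPowerSeries.coeff e F * PowerSeries.coeff 1 (a 0 ^ e 0 * a 1 ^ e 1) = 0
    rcases Nat.lt_or_ge (e 0 + e 1) 2 with hlt | hge
    · interval_cases hs : (e 0 + e 1)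
      · -- e = 0
        have he0 : e = 0 := by
          ext i; fin_cases i <;> simp <;> omega
        simp [he0, PowerSeries.coeff_one]
      · -- e is single 0 1 or single 1 1
        exfalso
        rcases Nat.eq_zero_or_pos (e 0) with h0 | h0
        · exact h2 (by ext i; fin_cases i <;> simp [Finsupp.single_apply] <;> omega)
        · exact h1 (by ext i; fin_cases i <;> simp [Finsupp.single_apply] <;> omega)
    · rw [coeff_vanish a h e 1 (by omega), mul_zero]

lemma nSeries_coeffs (F : MvPowerSeries (Fin 2) R)
    (hF0 : MvPowerSeries.coeff 0 F = 0)
    (hFx : MvPowerSeries.coeff (Finsupp.single (0 : Fin 2) 1) F = 1)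
    (hFy : MvPowerSeries.coeff (Finsupp.single (1 : Fin 2) 1) F = 1) :
    ∀ k : ℕ, PowerSeries.constantCoeff (MvPowerSeries.nSeries F k) = 0 ∧
      PowerSeries.coeff 1 (MvPowerSeries.nSeries F k) = (k : R) := by
  intro k
  induction k with
  | zero => simp [MvPowerSeries.nSeries]
  | succ m ih =>
    have ha : ∀ i, PowerSeries.constantCoeff
        ((![MvPowerSeries.nSeries F m, PowerSeries.X] : Fin 2 → PowerSeries R) i) = 0 := by
      intro i
      fin_cases i
      · exact ih.1
      · simp
    constructor
    · rw [MvPowerSeries.nSeries, ← PowerSeries.coeff_zero_eq_constantCoeff_apply]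
      exact coeff_zero_substitute _ F ha hF0
    · rw [MvPowerSeries.nSeries, coeff_one_substitute _ F ha]
      simp [hFx, hFy, ih.2]

lemma mul_step (P Q : PowerSeries R) (N : ℕ) (hP : ∀ l < N, PowerSeries.coeff l P = 0)
    (hQ : PowerSeries.constantCoeff Q = 0) :
    (∀ m < N + 1, PowerSeries.coeff m (Q * P) = 0) ∧
      PowerSeries.coeff (N + 1) (Q * P) = PowerSeries.coeff 1 Q * PowerSeries.coeff N P := by
  constructor
  · intro m hm
    rw [PowerSeries.coeff_mul]
    apply Finset.sum_eq_zero
    rintro ⟨i, l⟩ hp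
    rw [Finset.HasAntidiagonal.mem_antidiagonal] at hp
    rcases Nat.lt_or_ge l N with hl | hl
    · rw [hP l hl, mul_zero]
    · have hi : i = 0 := by omega
      subst hi
      rw [PowerSeries.coeff_zero_eq_constantCoeff, hQ, zero_mul]
  · rw [PowerSeries.coeff_mul]
    apply Finset.sum_eq_single_of_mem (1, N) (by rw [Finset.HasAntidiagonal.mem_antidiagonal]; omega)
    rintro ⟨i, l⟩ hp hne
    rw [Finset.HasAntidiagonal.mem_antidiagonal] at hp
    rcases Nat.lt_or_ge l N with hl | hl
    · rw [hP l hl, mul_zero]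
    · have hi : i = 0 := by
        rcases Nat.eq_or_lt_of_le hl with h' | h'
        · exfalso; apply hne; simp at hp ⊢; omega
        · omega
      subst hi
      rw [PowerSeries.coeff_zero_eq_constantCoeff, hQ, zero_mul]

lemma prod_coeffs (s : Finset ℕ) (g : ℕ → PowerSeries R)
    (h : ∀ k ∈ s, PowerSeries.constantCoeff (g k) = 0) :
    (∀ j < s.card, PowerSeries.coeff j (∏ k ∈ s, g k) = 0) ∧
      PowerSeries.coeff s.card (∏ k ∈ s, g k) = ∏ k ∈ s, PowerSeries.coeff 1 (g k) := by
  induction s using Finset.cons_induction with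
  | empty => simp
  | cons a s ha ih =>
    have ih' := ih (fun k hk => h k (Finset.mem_cons_of_mem hk))
    rw [Finset.prod_cons, Finset.prod_cons, Finset.card_cons]
    have := mul_step (∏ k ∈ s, g k) (g a) s.card ih'.1 (h a (Finset.mem_cons_self a s))
    exact ⟨this.1, by rw [this.2, ih'.2]⟩

end Stmt5Aux

/-- Let `R` be a commutative ring, `F ∈ R⟦x,y⟧` with zero constant
coefficient and coefficients of `x` and `y` both `1`, and `[n]_F` the associated
`n`-series.  Then for every `n ≥ 1`, the product `∏_{k=1}^{n} [k]_F(t)` has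
vanishing coefficient of `t^j` for all `j < n`, and its coefficient of `t^n`
equals `n! • 1_R`. -/
theorem stmt5 {R : Type*} [CommRing R] (F : MvPowerSeries (Fin 2) R)
    (hF0 : MvPowerSeries.coeff 0 F = 0)
    (hFx : MvPowerSeries.coeff (Finsupp.single (0 : Fin 2) 1) F = 1)
    (hFy : MvPowerSeries.coeff (Finsupp.single (1 : Fin 2) 1) F = 1)
    (n : ℕ) (hn : 1 ≤ n) :
    (∀ j < n, PowerSeries.coeff j
        (∏ k ∈ Finset.Icc 1 n, MvPowerSeries.nSeries F k) = 0) ∧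
      PowerSeries.coeff n (∏ k ∈ Finset.Icc 1 n, MvPowerSeries.nSeries F k) =
        n.factorial • (1 : R) := by
  have hcard : (Finset.Icc 1 n).card = n := by
    rw [Nat.card_Icc]; omega
  have h := Stmt5Aux.prod_coeffs (Finset.Icc 1 n) (MvPowerSeries.nSeries F)
    (fun k _ => (Stmt5Aux.nSeries_coeffs F hF0 hFx hFy k).1)
  rw [hcard] at h
  refine ⟨h.1, ?_⟩
  rw [h.2]
  have : ∀ k ∈ Finset.Icc 1 n, PowerSeries.coeff 1 (MvPowerSeries.nSeries F k) = ((k : ℕ) : R) :=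
    fun k _ => (Stmt5Aux.nSeries_coeffs F hF0 hFx hFy k).2
  rw [Finset.prod_congr rfl this, ← Nat.cast_prod]
  have : (∏ k ∈ Finset.Icc 1 n, k) = n.factorial := by
    rw [show Finset.Icc 1 n = Finset.Ico 1 (n + 1) by rfl]
    exact Finset.prod_Ico_id_eq_factorial n
  rw [this, nsmul_eq_mul, mul_one]
end

section
/- Let A = ℚ[β] be the polynomial ring in one variable β over ℚ. Let L ∈ A⟦z⟧ be the power series with constant coefficient 0 and with coefficient of zⁿ equal to β^{n−1}/n for every n ≥ 1. Let M ∈ A⟦z⟧ be the power series whose coefficient of zⁿ is β^{n−1}/n if n is a power of 3 and 0 otherwise. Suppose f ∈ A⟦x⟧ has constant coefficient 0 and satisfies M(f(x)) = L(x) (substitution of f into M). Then the coefficients of f satisfy: coefficient of x is 1, coefficient of x² is β/2, coefficient of x³ is 0, coefficient of x⁴ is −β³/4, and coefficient of x⁵ is −β⁴/20. -/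
section Aux

open PowerSeries

variable {R : Type*} [CommRing R]

lemma my_coeff_pow_eq_zero (f : PowerSeries R) (hf : constantCoeff f = 0)
    {d n : ℕ} (h : d < n) : coeff d (f ^ n) = 0 := by
  have hX : (X : R⟦X⟧) ∣ f := X_dvd_iff.mpr hf
  have : (X : R⟦X⟧) ^ n ∣ f ^ n := pow_dvd_pow_of_dvd hX n
  exact (X_pow_dvd_iff.mp this) d h

lemma my_coeff_substitute (f g : PowerSeries R) (hf : constantCoeff f = 0) (d : ℕ) :
    coeff d (PowerSeries.substitute f g) =
      ∑ n ∈ Finset.range (d + 1), coeff n g * coeff d (f ^ n) := by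
  have key : ∀ e : Unit →₀ ℕ,
      MvPowerSeries.coeff e g *
        MvPowerSeries.coeff (Finsupp.single () d) (e.prod fun _ n => f ^ n)
      = coeff (e ()) g * coeff d (f ^ (e ())) := by
    intro e
    have h1 : e.prod (fun _ n => f ^ n) = f ^ (e ()) := by
      rw [Finsupp.prod_fintype]
      · simp
      · intro i; simp
    have h2 : e = Finsupp.single () (e ()) := Finsupp.unique_single e
    rw [h1]
    conv_lhs => rw [h2]
    simp only [Finsupp.single_eq_same]
    rfl
  have heq : coeff d (PowerSeries.substitute f g)
      = ∑ᶠ e : Unit →₀ ℕ, coeff (e ()) g * coeff d (f ^ (e ())) := by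
    show (∑ᶠ e : Unit →₀ ℕ, MvPowerSeries.coeff e g *
      MvPowerSeries.coeff (Finsupp.single () d) (e.prod fun _ n => f ^ n)) = _
    exact finsum_congr key
  rw [heq]
  have hsub : (Function.support fun e : Unit →₀ ℕ =>
      coeff (e ()) g * coeff d (f ^ (e ()))) ⊆
      ↑((Finset.range (d + 1)).image (Finsupp.single ())) := by
    intro e he
    simp only [Function.mem_support] at he
    have hle : e () ≤ d := by
      by_contra hgt
      push_neg at hgt
      rw [my_coeff_pow_eq_zero f hf hgt, mul_zero] at he
      exact he rfl
    simp only [Finset.coe_image, Set.mem_image, Finset.mem_coe, Finset.mem_range]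
    exact ⟨e (), by omega, (Finsupp.unique_single e).symm⟩
  rw [finsum_eq_finset_sum_of_support_subset _ hsub,
    Finset.sum_image (fun a _ b _ h => by
      simpa using (Finsupp.unique_single_eq_iff (a := ()) (a' := ())).mp h)]
  simp [Finsupp.single_eq_same]

end Aux

/-- Let `A = ℚ[β]`.  Let `L ∈ A⟦z⟧` have constant coefficient `0` and
coefficient of `zⁿ` equal to `β^(n−1)/n` for every `n ≥ 1`.  Let `M ∈ A⟦z⟧` have
coefficient of `zⁿ` equal to `β^(n−1)/n` if `n` is a power of `3` and `0` otherwise.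
If `f ∈ A⟦x⟧` has constant coefficient `0` and satisfies `M(f(x)) = L(x)`, then the
coefficients of `f` satisfy: coefficient of `x` is `1`, of `x²` is `β/2`, of `x³`
is `0`, of `x⁴` is `−β³/4`, and of `x⁵` is `−β⁴/20`. -/
theorem stmt11 (L M : PowerSeries (Polynomial ℚ))
    (hL0 : PowerSeries.constantCoeff L = 0)
    (hL : ∀ n : ℕ, 1 ≤ n → PowerSeries.coeff n L =
      Polynomial.C ((n : ℚ)⁻¹) * Polynomial.X ^ (n - 1))
    (hM : ∀ n : ℕ, (∃ k : ℕ, n = 3 ^ k) →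
      PowerSeries.coeff n M =
        Polynomial.C ((n : ℚ)⁻¹) * Polynomial.X ^ (n - 1))
    (hM' : ∀ n : ℕ, (¬ ∃ k : ℕ, n = 3 ^ k) →
      PowerSeries.coeff n M = 0)
    (f : PowerSeries (Polynomial ℚ))
    (hf0 : PowerSeries.constantCoeff f = 0)
    (hMf : PowerSeries.substitute f M = L) :
    PowerSeries.coeff 1 f = 1 ∧
    PowerSeries.coeff 2 f = Polynomial.C ((2 : ℚ)⁻¹) * Polynomial.X ∧
    PowerSeries.coeff 3 f = 0 ∧
    PowerSeries.coeff 4 f =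
      -(Polynomial.C ((4 : ℚ)⁻¹) * Polynomial.X ^ 3) ∧
    PowerSeries.coeff 5 f =
      -(Polynomial.C ((20 : ℚ)⁻¹) * Polynomial.X ^ 4) := by
  have npow : ∀ n : ℕ, n = 2 ∨ n = 4 ∨ n = 5 → ¬ ∃ k : ℕ, n = 3 ^ k := by
    rintro n hn ⟨k, hk⟩
    rcases k with _ | k
    · omega
    · have h3 : (3 : ℕ) ∣ 3 ^ (k + 1) := dvd_pow_self 3 (by omega)
      omega
  have hM0 : PowerSeries.coeff 0 M = 0 := by
    refine hM' 0 ?_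
    rintro ⟨k, hk⟩
    have h1 : 1 ≤ 3 ^ k := Nat.one_le_pow _ _ (by norm_num)
    omega
  have hM1 : PowerSeries.coeff 1 M = 1 := by
    have := hM 1 ⟨0, by norm_num⟩; simpa using this
  have hM2 : PowerSeries.coeff 2 M = 0 := hM' 2 (npow 2 (by norm_num))
  have hM3 : PowerSeries.coeff 3 M
      = Polynomial.C ((3:ℚ)⁻¹) * Polynomial.X ^ 2 := by
    have := hM 3 ⟨1, by norm_num⟩; simpa using this
  have hM4 : PowerSeries.coeff 4 M = 0 := hM' 4 (npow 4 (by norm_num))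
  have hM5 : PowerSeries.coeff 5 M = 0 := hM' 5 (npow 5 (by norm_num))
  have key : ∀ d : ℕ,
      (∑ n ∈ Finset.range (d + 1),
        PowerSeries.coeff n M * PowerSeries.coeff d (f ^ n))
        = PowerSeries.coeff d L := by
    intro d
    rw [← my_coeff_substitute f M hf0 d]
    exact congrArg _ hMf
  have hff0 : PowerSeries.coeff 0 (f ^ 2) = 0 := by
    rw [pow_two, PowerSeries.coeff_mul, Finset.Nat.sum_antidiagonal_eq_sum_range_succ_mk]
    simp [Finset.sum_range_succ, hf0]
  have hff1 : PowerSeries.coeff 1 (f ^ 2) = 0 := by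
    rw [pow_two, PowerSeries.coeff_mul, Finset.Nat.sum_antidiagonal_eq_sum_range_succ_mk]
    simp [Finset.sum_range_succ, hf0]
  have hff2 : PowerSeries.coeff 2 (f ^ 2)
      = PowerSeries.coeff 1 f * PowerSeries.coeff 1 f := by
    rw [pow_two, PowerSeries.coeff_mul, Finset.Nat.sum_antidiagonal_eq_sum_range_succ_mk]
    simp [Finset.sum_range_succ, hf0]
  have hff3 : PowerSeries.coeff 3 (f ^ 2)
      = 2 * (PowerSeries.coeff 1 f * PowerSeries.coeff 2 f) := by
    rw [pow_two, PowerSeries.coeff_mul, Finset.Nat.sum_antidiagonal_eq_sum_range_succ_mk]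
    simp [Finset.sum_range_succ, hf0] <;> ring
  have hff4 : PowerSeries.coeff 4 (f ^ 2)
      = 2 * (PowerSeries.coeff 1 f * PowerSeries.coeff 3 f)
        + PowerSeries.coeff 2 f * PowerSeries.coeff 2 f := by
    rw [pow_two, PowerSeries.coeff_mul, Finset.Nat.sum_antidiagonal_eq_sum_range_succ_mk]
    simp [Finset.sum_range_succ, hf0] <;> ring
  have hfff3 : PowerSeries.coeff 3 (f ^ 3)
      = PowerSeries.coeff 1 f ^ 3 := by
    rw [show f ^ 3 = f * f ^ 2 by ring, PowerSeries.coeff_mul,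
      Finset.Nat.sum_antidiagonal_eq_sum_range_succ_mk]
    simp [Finset.sum_range_succ, hf0, hff0, hff1, hff2] <;> ring
  have hfff4 : PowerSeries.coeff 4 (f ^ 3)
      = 3 * (PowerSeries.coeff 1 f ^ 2 * PowerSeries.coeff 2 f) := by
    rw [show f ^ 3 = f * f ^ 2 by ring, PowerSeries.coeff_mul,
      Finset.Nat.sum_antidiagonal_eq_sum_range_succ_mk]
    simp [Finset.sum_range_succ, hf0, hff0, hff1, hff2, hff3] <;> ring
  have hfff5 : PowerSeries.coeff 5 (f ^ 3)
      = 3 * (PowerSeries.coeff 1 f ^ 2 * PowerSeries.coeff 3 f)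
        + 3 * (PowerSeries.coeff 1 f * PowerSeries.coeff 2 f ^ 2) := by
    rw [show f ^ 3 = f * f ^ 2 by ring, PowerSeries.coeff_mul,
      Finset.Nat.sum_antidiagonal_eq_sum_range_succ_mk]
    simp [Finset.sum_range_succ, hf0, hff0, hff1, hff2, hff3, hff4] <;> ring
  have E1 := key 1
  rw [hL 1 (by norm_num)] at E1
  simp [Finset.sum_range_succ, hM0, hM1, hf0] at E1
  have E2 := key 2
  rw [hL 2 (by norm_num)] at E2
  simp [Finset.sum_range_succ, hM0, hM1, hM2, hf0] at E2
  have E3 := key 3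
  rw [hL 3 (by norm_num)] at E3
  simp [Finset.sum_range_succ, hM0, hM1, hM2, hM3, hf0, hfff3, E1] at E3
  have E4 := key 4
  rw [hL 4 (by norm_num)] at E4
  simp [Finset.sum_range_succ, hM0, hM1, hM2, hM3, hM4, hf0, hfff4, E1, E2] at E4
  have E5 := key 5
  rw [hL 5 (by norm_num)] at E5
  simp [Finset.sum_range_succ, hM0, hM1, hM2, hM3, hM4, hM5, hf0, hfff5, E1, E2, E3] at E5
  have hc3 : (3 : Polynomial ℚ) = Polynomial.C (3 : ℚ) := (map_ofNat Polynomial.C 3).symm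
  have h1 : Polynomial.C ((3:ℚ)⁻¹) * Polynomial.C ((2:ℚ)⁻¹) = Polynomial.C ((6:ℚ)⁻¹) := by
    rw [← Polynomial.C_mul]; norm_num
  have h2 : (3 : Polynomial ℚ) * Polynomial.C ((6:ℚ)⁻¹) = Polynomial.C ((2:ℚ)⁻¹) := by
    rw [hc3, ← Polynomial.C_mul]; norm_num
  have h3 : Polynomial.C ((2:ℚ)⁻¹) = 2 * Polynomial.C ((4:ℚ)⁻¹) := by
    rw [(map_ofNat Polynomial.C 2).symm, ← Polynomial.C_mul]; norm_num
  have h4 : Polynomial.C ((2:ℚ)⁻¹) * Polynomial.C ((2:ℚ)⁻¹) = Polynomial.C ((4:ℚ)⁻¹) := by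
    rw [← Polynomial.C_mul]; norm_num
  have h5 : (3 : Polynomial ℚ) * Polynomial.C ((3:ℚ)⁻¹) = 1 := by
    rw [hc3, ← Polynomial.C_mul]; norm_num
  have h6 : Polynomial.C ((5:ℚ)⁻¹) = Polynomial.C ((4:ℚ)⁻¹) - Polynomial.C ((20:ℚ)⁻¹) := by
    rw [← Polynomial.C_sub]; norm_num
  refine ⟨E1, E2, E3, ?_, ?_⟩
  · linear_combination E4 - 3*Polynomial.X^3*h1 - Polynomial.X^3*h2 - Polynomial.X^3*h3
  · linear_combination E5 + Polynomial.X^4*h6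
      - 3*Polynomial.C ((3:ℚ)⁻¹)*Polynomial.X^4*h4
      - Polynomial.C ((4:ℚ)⁻¹)*Polynomial.X^4*h5
end
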